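/- Let m ≥ 1 be a natural number and let t₁, t₂ be fixed real numbers. Define ψ₁(x) = ∑_{k=0}^∞ 1/(x+k)² for x > 0, τ(ν) = m + ν + 2, and for ν > 4: B(ν) = νm/τ(ν); A(ν) = (ν²/((ν−2)(ν−4)))(2t₂ + t₁²); C(ν) = (2m/(τ(ν)ν) + 1)·A(ν) − ((ν+2)/(ν−2))·t₁²; D(ν) = −( (2m/ν)·(τ(ν)+2)/(τ(ν)(τ(ν)−2)) + ψ₁((ν+m)/2) − ψ₁(ν/2) ); B₁₁(ν) = −2νm t₁/((ν−2)τ(ν)); B₁₂(ν) = −m/((τ(ν)−2)τ(ν)); C₁₁(ν) = m t₁/((ν−2)(τ(ν)−2)τ(ν)). Set Δ(ν) = B(ν)C(ν)D(ν) + 16(B₁₁(ν)C₁₁(ν)B₁₂(ν) − B(ν)C₁₁(ν)²) − 8B₁₂(ν)²C(ν) − (1/2)B₁₁(ν)²D(ν). Then Δ(ν) = O(ν^{-3}) as ν → +∞. -/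

import Mathlib

open Filter Asymptotics Topology

/-- The trigamma function, defined by its convergent series for x > 0. -/
noncomputable def psi1 (x : ℝ) : ℝ := ∑' k : ℕ, 1 / (x + k) ^ 2

/-- The quantity Δ(ν) inside the square root of the reference prior of Theorem 1,
with m = n − p, t₁ = tr Φ and t₂ = tr Φ² held fixed. -/
noncomputable def Δfun (m : ℕ) (t₁ t₂ : ℝ) (ν : ℝ) : ℝ :=
  let τ : ℝ := (m : ℝ) + ν + 2
  let B : ℝ := ν * m / τ
  let A : ℝ := ν ^ 2 / ((ν - 2) * (ν - 4)) * (2 * t₂ + t₁ ^ 2)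
  let C : ℝ := (2 * m / (τ * ν) + 1) * A - (ν + 2) / (ν - 2) * t₁ ^ 2
  let D : ℝ := -(2 * m / ν * (τ + 2) / (τ * (τ - 2)) +
    psi1 ((ν + m) / 2) - psi1 (ν / 2))
  let B11 : ℝ := -(2 * ν * m * t₁) / ((ν - 2) * τ)
  let B12 : ℝ := -(m : ℝ) / ((τ - 2) * τ)
  let C11 : ℝ := m * t₁ / ((ν - 2) * (τ - 2) * τ)
  B * C * D + 16 * (B11 * C11 * B12 - B * C11 ^ 2) - 8 * B12 ^ 2 * C -
    1 / 2 * B11 ^ 2 * D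

lemma hasSum_telescope {g : ℕ → ℝ} (h0 : ∀ k, 0 ≤ g k - g (k + 1))
    (hg : Tendsto g atTop (𝓝 0)) : HasSum (fun k => g k - g (k + 1)) (g 0) := by
  rw [hasSum_iff_tendsto_nat_of_nonneg h0]
  have h : (fun n : ℕ => ∑ i ∈ Finset.range n, (g i - g (i + 1))) = fun n => g 0 - g n := by
    funext n; exact Finset.sum_range_sub' g n
  rw [h]
  simpa using tendsto_const_nhds.sub hg

lemma summable_psi1 {x : ℝ} (hx : 0 < x) : Summable (fun k : ℕ => 1 / (x + k) ^ 2) := by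
  have h2 : Summable (fun n : ℕ => 1 / ((n : ℝ)) ^ 2) := by
    exact_mod_cast Real.summable_one_div_nat_pow.mpr one_lt_two
  have h1 : Summable (fun n : ℕ => 1 / ((n : ℝ) + 1) ^ 2) := by
    have := (summable_nat_add_iff 1).mpr h2
    simpa [Nat.cast_add] using this
  refine Summable.of_nonneg_of_le (fun k => by positivity) (fun k => ?_)
    (h1.mul_left (((x + 1) / x) ^ 2))
  have hk : (0:ℝ) ≤ (k : ℝ) := Nat.cast_nonneg k
  have hxk : 0 < x + (k : ℝ) := by linarith
  have hk1 : (0:ℝ) < (k : ℝ) + 1 := by linarith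
  rw [div_pow, div_mul_div_comm]
  rw [div_le_div_iff₀ (by positivity) (by positivity)]
  nlinarith [sq_nonneg ((k:ℝ) * x), sq_nonneg x, mul_pos hx hk1, sq_nonneg ((k:ℝ) - x)]

lemma key_id {a : ℝ} (ha : 0 < a) :
    1 / a ^ 2 - ((1 / a + 1 / (2 * a ^ 2)) - (1 / (a + 1) + 1 / (2 * (a + 1) ^ 2)))
      = 1 / (2 * a ^ 2 * (a + 1) ^ 2) := by
  have h1 : a ≠ 0 := ne_of_gt ha
  have h2 : a + 1 ≠ 0 := by positivity
  field_simp
  ring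

lemma psi1_est {x : ℝ} (hx : 0 < x) :
    0 ≤ psi1 x - (1 / x + 1 / (2 * x ^ 2)) ∧
      psi1 x - (1 / x + 1 / (2 * x ^ 2)) ≤ 1 / (2 * x ^ 3) := by
  have hxk : ∀ k : ℕ, 0 < x + (k : ℝ) := fun k =>
    add_pos_of_pos_of_nonneg hx (Nat.cast_nonneg k)
  set g : ℕ → ℝ := fun k => 1 / (x + k) + 1 / (2 * (x + k) ^ 2) with hgdef
  have hcast : ∀ k : ℕ, x + ((k + 1 : ℕ) : ℝ) = (x + k) + 1 := by
    intro k; push_cast; ring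
  -- pointwise identity for the defect term
  have heq : ∀ k : ℕ, 1 / (x + k) ^ 2 - (g k - g (k + 1))
      = 1 / (2 * (x + k) ^ 2 * ((x + k) + 1) ^ 2) := by
    intro k
    have := key_id (hxk k)
    simp only [hgdef]
    rw [hcast k]
    linarith [this]
  -- nonnegativity of telescoping increments
  have hg0 : ∀ k : ℕ, 0 ≤ g k - g (k + 1) := by
    intro k
    have hk := hxk k
    simp only [hgdef]
    rw [hcast k]
    have h1 : 1 / ((x + (k:ℝ)) + 1) ≤ 1 / (x + (k:ℝ)) :=
      div_le_div_of_nonneg_left (by norm_num) hk (by linarith)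
    have h2 : 1 / (2 * ((x + (k:ℝ)) + 1) ^ 2) ≤ 1 / (2 * (x + (k:ℝ)) ^ 2) := by
      apply div_le_div_of_nonneg_left (by norm_num) (by positivity)
      nlinarith
    linarith
  -- g tends to 0
  have hat : Tendsto (fun k : ℕ => x + (k : ℝ)) atTop atTop :=
    tendsto_atTop_add_const_left atTop x tendsto_natCast_atTop_atTop
  have t1 : Tendsto (fun k : ℕ => 1 / (x + (k : ℝ))) atTop (𝓝 0) := by
    simpa [one_div, Pi.inv_def] using hat.inv_tendsto_atTop
  have t2 : Tendsto (fun k : ℕ => 1 / (2 * (x + (k : ℝ)) ^ 2)) atTop (𝓝 0) := by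
    have h2 : Tendsto (fun k : ℕ => 2 * (x + (k : ℝ)) ^ 2) atTop atTop := by
      apply Tendsto.const_mul_atTop (by norm_num : (0:ℝ) < 2)
      simpa [pow_two] using hat.atTop_mul_atTop₀ hat
    simpa only [one_div, Pi.inv_def] using h2.inv_tendsto_atTop
  have htg : Tendsto g atTop (𝓝 0) := by
    rw [hgdef]
    simpa only [add_zero] using t1.add t2
  have hTele : HasSum (fun k : ℕ => g k - g (k + 1)) (g 0) := hasSum_telescope hg0 htg
  have hs : HasSum (fun k : ℕ => 1 / (x + k) ^ 2) (psi1 x) := (summable_psi1 hx).hasSum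
  have hD : HasSum (fun k : ℕ => 1 / (x + k) ^ 2 - (g k - g (k + 1))) (psi1 x - g 0) :=
    hs.sub hTele
  have hg0val : g 0 = 1 / x + 1 / (2 * x ^ 2) := by
    simp [hgdef]
  -- lower bound
  have hlow : 0 ≤ psi1 x - g 0 := by
    refine hD.nonneg fun k => ?_
    rw [heq k]
    have := hxk k
    positivity
  -- telescoping comparison series
  have hg0' : ∀ k : ℕ, 0 ≤ (fun k : ℕ => 1 / (x + k)) k - (fun k : ℕ => 1 / (x + k)) (k + 1) := by
    intro k
    simp only
    rw [hcast k]
    have hk := hxk k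
    have : 1 / ((x + k) + 1) ≤ 1 / (x + k) :=
      div_le_div_of_nonneg_left (by norm_num) hk (by linarith)
    linarith
  have hTele' : HasSum (fun k : ℕ => 1 / (x + (k : ℝ)) - 1 / (x + ((k + 1 : ℕ) : ℝ)))
      (1 / (x + ((0 : ℕ) : ℝ))) := hasSum_telescope hg0' t1
  have hx0 : x + ((0 : ℕ) : ℝ) = x := by norm_num
  rw [hx0] at hTele'
  have hTele'' : HasSum (fun k : ℕ => 1 / (2 * x ^ 2) * (1 / (x + (k : ℝ)) - 1 / (x + ((k + 1 : ℕ) : ℝ))))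
      (1 / (2 * x ^ 2) * (1 / x)) := hTele'.mul_left (1 / (2 * x ^ 2))
  have hupp : psi1 x - g 0 ≤ 1 / (2 * x ^ 2) * (1 / x) := by
    refine hasSum_le (fun k => ?_) hD hTele''
    rw [heq k, hcast k]
    have hk := hxk k
    have hxle : x ≤ x + (k : ℝ) := by
      have := Nat.cast_nonneg (α := ℝ) k; linarith
    have hfrac : 1 / (x + (k:ℝ)) - 1 / ((x + (k:ℝ)) + 1) = 1 / ((x + k) * ((x + k) + 1)) := by
      field_simp
      ring
    rw [hfrac, div_mul_div_comm, one_mul]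
    apply div_le_div_of_nonneg_left (by norm_num) (by positivity)
    have hP1 : 0 < (x + (k:ℝ)) * ((x + (k:ℝ)) + 1) := by nlinarith
    have hx2 : x ^ 2 ≤ (x + (k:ℝ)) * ((x + (k:ℝ)) + 1) := by nlinarith
    nlinarith [mul_le_mul_of_nonneg_right hx2 (le_of_lt hP1)]
  have hfin : 1 / (2 * x ^ 2) * (1 / x) = 1 / (2 * x ^ 3) := by
    field_simp
  rw [hg0val] at hlow hupp
  exact ⟨hlow, by linarith [hupp, hfin.symm.le]⟩

-- ========================= main theorem ==========================

lemma obnd (f : ℝ → ℝ) (c : ℝ) (h : ∀ ν : ℝ, 12 ≤ ν → |f ν| ≤ c) :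
    f =O[atTop] (fun _ : ℝ => (1:ℝ)) := by
  apply IsBigO.of_bound c
  filter_upwards [eventually_ge_atTop 12] with ν hν
  simpa using h ν hν

lemma obnd3 (f : ℝ → ℝ) (c : ℝ) (h : ∀ ν : ℝ, 12 ≤ ν → |f ν| ≤ c / ν ^ 3) :
    f =O[atTop] (fun ν : ℝ => (ν ^ 3)⁻¹) := by
  apply IsBigO.of_bound c
  filter_upwards [eventually_ge_atTop 12] with ν hν
  have hν0 : (0:ℝ) < ν := by linarith
  have h3 : (0:ℝ) < ν ^ 3 := by positivity
  rw [Real.norm_eq_abs, Real.norm_eq_abs, abs_inv, abs_of_pos h3]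
  calc |f ν| ≤ c / ν ^ 3 := h ν hν
  _ = c * (ν ^ 3)⁻¹ := by rw [div_eq_mul_inv]

lemma hcube1 : (fun ν : ℝ => (ν ^ 3)⁻¹) =O[atTop] (fun _ : ℝ => (1:ℝ)) := by
  apply obnd _ 1
  intro ν hν
  have h1 : (1:ℝ) ≤ ν ^ 3 := by
    calc (1:ℝ) = 1 ^ 3 := by norm_num
    _ ≤ ν ^ 3 := by apply pow_le_pow_left₀ (by norm_num) (by linarith)
  rw [abs_inv, abs_of_pos (by positivity : (0:ℝ) < ν ^ 3)]
  exact inv_le_one_of_one_le₀ h1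

set_option maxHeartbeats 1000000 in
theorem stmt15 (m : ℕ) (hm : 1 ≤ m) (t₁ t₂ : ℝ) :
    (Δfun m t₁ t₂) =O[atTop] fun ν : ℝ => ν ^ (-3 : ℝ) := by
  have hM : (1:ℝ) ≤ (m:ℝ) := by exact_mod_cast hm
  have hM0 : (0:ℝ) < (m:ℝ) := by linarith
  -- basic positivity package
  have std : ∀ ν : ℝ, 12 ≤ ν → (0:ℝ) < ν ∧ (0:ℝ) < ν - 2 ∧ (0:ℝ) < ν - 4 ∧
      (0:ℝ) < (m:ℝ) + ν + 2 ∧ (0:ℝ) < ν + (m:ℝ) := by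
    intro ν hν
    refine ⟨by linarith, by linarith, by linarith, by linarith, by linarith⟩
  -- B = O(1)
  have hB : (fun ν : ℝ => ν * (m:ℝ) / ((m:ℝ) + ν + 2)) =O[atTop] (fun _ : ℝ => (1:ℝ)) := by
    apply obnd _ (m:ℝ)
    intro ν hν
    obtain ⟨h0, h2, h4, hτ, hνM⟩ := std ν hν
    rw [abs_of_nonneg (div_nonneg (by nlinarith) hτ.le), div_le_iff₀ hτ]
    nlinarith
  -- the factor (2m/(τν)+1) = O(1)
  have hU : (fun ν : ℝ => 2 * (m:ℝ) / (((m:ℝ) + ν + 2) * ν) + 1) =O[atTop] (fun _ : ℝ => (1:ℝ)) := by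
    apply obnd _ 2
    intro ν hν
    obtain ⟨h0, h2, h4, hτ, hνM⟩ := std ν hν
    have hp : (0:ℝ) < ((m:ℝ) + ν + 2) * ν := by positivity
    have hle : 2 * (m:ℝ) / (((m:ℝ) + ν + 2) * ν) ≤ 1 := by
      rw [div_le_one hp]; nlinarith
    have hge : (0:ℝ) ≤ 2 * (m:ℝ) / (((m:ℝ) + ν + 2) * ν) := by positivity
    rw [abs_of_nonneg (by linarith)]
    linarith
  -- A = O(1)
  have hA : (fun ν : ℝ => ν ^ 2 / ((ν - 2) * (ν - 4)) * (2 * t₂ + t₁ ^ 2)) =O[atTop] (fun _ : ℝ => (1:ℝ)) := by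
    apply obnd _ (4 * |2 * t₂ + t₁ ^ 2|)
    intro ν hν
    obtain ⟨h0, h2, h4, hτ, hνM⟩ := std ν hν
    rw [abs_mul]
    have h1 : |ν ^ 2 / ((ν - 2) * (ν - 4))| ≤ 4 := by
      rw [abs_of_nonneg (div_nonneg (by positivity) (by positivity)), div_le_iff₀ (by positivity)]
      nlinarith
    exact mul_le_mul_of_nonneg_right h1 (abs_nonneg _)
  -- the subtracted term in C = O(1)
  have hV : (fun ν : ℝ => (ν + 2) / (ν - 2) * t₁ ^ 2) =O[atTop] (fun _ : ℝ => (1:ℝ)) := by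
    apply obnd _ (4 * t₁ ^ 2)
    intro ν hν
    obtain ⟨h0, h2, h4, hτ, hνM⟩ := std ν hν
    rw [abs_mul, abs_of_nonneg (div_nonneg (by linarith) h2.le), abs_of_nonneg (sq_nonneg t₁)]
    have h1 : (ν + 2) / (ν - 2) ≤ 4 := by
      rw [div_le_iff₀ h2]; nlinarith
    nlinarith [sq_nonneg t₁, h1, div_nonneg (show (0:ℝ) ≤ ν + 2 by linarith) h2.le]
  -- C = O(1)
  have hC : (fun ν : ℝ => (2 * (m:ℝ) / (((m:ℝ) + ν + 2) * ν) + 1) * (ν ^ 2 / ((ν - 2) * (ν - 4)) * (2 * t₂ + t₁ ^ 2)) - (ν + 2) / (ν - 2) * t₁ ^ 2) =O[atTop] (fun _ : ℝ => (1:ℝ)) := by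
    have huv := (hU.mul hA).congr (fun ν : ℝ => rfl) (fun ν : ℝ => one_mul (1:ℝ))
    exact huv.sub hV
  -- the rational part of -D
  have hF : (fun ν : ℝ => 2 * (m:ℝ) / ν * (((m:ℝ) + ν + 2) + 2) / (((m:ℝ) + ν + 2) * (((m:ℝ) + ν + 2) - 2)) + (2 / (ν + (m:ℝ)) + 2 / (ν + (m:ℝ)) ^ 2 - 2 / ν - 2 / ν ^ 2)) =O[atTop] (fun ν : ℝ => (ν ^ 3)⁻¹) := by
    apply obnd3 _ (2 * (m:ℝ) ^ 4 + 8 * (m:ℝ) ^ 3 + 14 * (m:ℝ) ^ 2 + 8 * (m:ℝ))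
    intro ν hν
    obtain ⟨h0, h2, h4, hτ, hνM⟩ := std ν hν
    have hid : 2 * (m:ℝ) / ν * (((m:ℝ) + ν + 2) + 2) / (((m:ℝ) + ν + 2) * (((m:ℝ) + ν + 2) - 2)) + (2 / (ν + (m:ℝ)) + 2 / (ν + (m:ℝ)) ^ 2 - 2 / ν - 2 / ν ^ 2)
        = (-(2 * (m:ℝ) ^ 4 + 4 * (m:ℝ) ^ 3) - (4 * (m:ℝ) ^ 3 + 12 * (m:ℝ) ^ 2) * ν
            - (2 * (m:ℝ) ^ 2 + 8 * (m:ℝ)) * ν ^ 2) / (ν ^ 2 * (ν + (m:ℝ)) ^ 3 * ((m:ℝ) + ν + 2)) := by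
      have e1 : ν ≠ 0 := ne_of_gt h0
      have e2 : ν + (m:ℝ) ≠ 0 := ne_of_gt hνM
      have e3 : (m:ℝ) + ν + 2 ≠ 0 := ne_of_gt hτ
      have e4 : (m:ℝ) + ν + 2 - 2 ≠ 0 := by intro h; apply e2; linarith
      field_simp
      ring
    rw [hid, abs_div]
    have hden : (0:ℝ) < ν ^ 2 * (ν + (m:ℝ)) ^ 3 * ((m:ℝ) + ν + 2) := by positivity
    rw [abs_of_pos hden]
    have hnum : |(-(2 * (m:ℝ) ^ 4 + 4 * (m:ℝ) ^ 3) - (4 * (m:ℝ) ^ 3 + 12 * (m:ℝ) ^ 2) * ν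
        - (2 * (m:ℝ) ^ 2 + 8 * (m:ℝ)) * ν ^ 2)|
        ≤ (2 * (m:ℝ) ^ 4 + 8 * (m:ℝ) ^ 3 + 14 * (m:ℝ) ^ 2 + 8 * (m:ℝ)) * ν ^ 2 := by
      have hnn : (-(2 * (m:ℝ) ^ 4 + 4 * (m:ℝ) ^ 3) - (4 * (m:ℝ) ^ 3 + 12 * (m:ℝ) ^ 2) * ν
          - (2 * (m:ℝ) ^ 2 + 8 * (m:ℝ)) * ν ^ 2) ≤ 0 := by nlinarith
      rw [abs_of_nonpos hnn]
      have e1 : (0:ℝ) ≤ ν ^ 2 - ν := by nlinarith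
      have e2 : (0:ℝ) ≤ ν ^ 2 - 1 := by nlinarith
      have p2 : (0:ℝ) ≤ (m:ℝ) ^ 2 := sq_nonneg _
      have p3 : (0:ℝ) ≤ (m:ℝ) ^ 3 := by positivity
      have p4 : (0:ℝ) ≤ (m:ℝ) ^ 4 := by positivity
      nlinarith [mul_nonneg p4 e2, mul_nonneg p3 e2, mul_nonneg p3 e1, mul_nonneg p2 e1]
    have hden2 : ν ^ 3 * ν ^ 2 ≤ ν ^ 2 * (ν + (m:ℝ)) ^ 3 * ((m:ℝ) + ν + 2) := by
      have g1 : ν ^ 3 ≤ (ν + (m:ℝ)) ^ 3 := by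
        apply pow_le_pow_left₀ h0.le (by linarith)
      have g2 : (1:ℝ) ≤ (m:ℝ) + ν + 2 := by linarith
      calc ν ^ 3 * ν ^ 2 = ν ^ 2 * ν ^ 3 * 1 := by ring
      _ ≤ ν ^ 2 * (ν + (m:ℝ)) ^ 3 * ((m:ℝ) + ν + 2) := by
          apply mul_le_mul (mul_le_mul_of_nonneg_left g1 (by positivity)) g2 (by norm_num)
          positivity
    calc |(-(2 * (m:ℝ) ^ 4 + 4 * (m:ℝ) ^ 3) - (4 * (m:ℝ) ^ 3 + 12 * (m:ℝ) ^ 2) * ν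
          - (2 * (m:ℝ) ^ 2 + 8 * (m:ℝ)) * ν ^ 2)| / (ν ^ 2 * (ν + (m:ℝ)) ^ 3 * ((m:ℝ) + ν + 2))
        ≤ ((2 * (m:ℝ) ^ 4 + 8 * (m:ℝ) ^ 3 + 14 * (m:ℝ) ^ 2 + 8 * (m:ℝ)) * ν ^ 2) / (ν ^ 3 * ν ^ 2) := by
          apply div_le_div₀ (by positivity) hnum (by positivity) hden2
    _ = (2 * (m:ℝ) ^ 4 + 8 * (m:ℝ) ^ 3 + 14 * (m:ℝ) ^ 2 + 8 * (m:ℝ)) / ν ^ 3 :=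
          mul_div_mul_right _ _ (by positivity)
  -- the trigamma error part of -D
  have hE : (fun ν : ℝ => psi1 ((ν + (m:ℝ)) / 2) - psi1 (ν / 2) - (2 / (ν + (m:ℝ)) + 2 / (ν + (m:ℝ)) ^ 2 - 2 / ν - 2 / ν ^ 2)) =O[atTop] (fun ν : ℝ => (ν ^ 3)⁻¹) := by
    apply obnd3 _ 8
    intro ν hν
    obtain ⟨h0, h2, h4, hτ, hνM⟩ := std ν hν
    have ha : (0:ℝ) < (ν + (m:ℝ)) / 2 := by linarith
    have hb : (0:ℝ) < ν / 2 := by linarith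
    obtain ⟨ea1, ea2⟩ := psi1_est ha
    obtain ⟨eb1, eb2⟩ := psi1_est hb
    have hne1 : ν + (m:ℝ) ≠ 0 := ne_of_gt hνM
    have hne2 : ν ≠ 0 := ne_of_gt h0
    have ga1 : 1 / ((ν + (m:ℝ)) / 2) = 2 / (ν + (m:ℝ)) := by rw [one_div_div]
    have ga2 : 1 / (2 * ((ν + (m:ℝ)) / 2) ^ 2) = 2 / (ν + (m:ℝ)) ^ 2 := by
      field_simp
    have ga3 : 1 / (2 * ((ν + (m:ℝ)) / 2) ^ 3) = 4 / (ν + (m:ℝ)) ^ 3 := by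
      field_simp; ring
    have gb1 : 1 / (ν / 2) = 2 / ν := by rw [one_div_div]
    have gb2 : 1 / (2 * (ν / 2) ^ 2) = 2 / ν ^ 2 := by
      field_simp
    have gb3 : 1 / (2 * (ν / 2) ^ 3) = 4 / ν ^ 3 := by
      field_simp; ring
    rw [ga1, ga2] at ea1 ea2
    rw [gb1, gb2] at eb1 eb2
    rw [ga3] at ea2
    rw [gb3] at eb2
    have ha3 : 4 / (ν + (m:ℝ)) ^ 3 ≤ 4 / ν ^ 3 := by
      apply div_le_div_of_nonneg_left (by norm_num) (by positivity)
      apply pow_le_pow_left₀ h0.le (by linarith)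
    have h40 : (0:ℝ) ≤ 4 / ν ^ 3 := by positivity
    have h8 : (8:ℝ) / ν ^ 3 = 4 / ν ^ 3 + 4 / ν ^ 3 := by ring
    rw [abs_le]
    constructor
    · linarith [ea1, eb2]
    · linarith [ea2, eb1, ha3]
  -- D = O(ν⁻³)
  have hDf : (fun ν : ℝ => -(2 * (m:ℝ) / ν * (((m:ℝ) + ν + 2) + 2) / (((m:ℝ) + ν + 2) * (((m:ℝ) + ν + 2) - 2)) + psi1 ((ν + (m:ℝ)) / 2) - psi1 (ν / 2))) =O[atTop] (fun ν : ℝ => (ν ^ 3)⁻¹) := by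
    have := (hF.add hE).neg_left
    exact this.congr (fun ν => by ring) (fun ν => rfl)
  -- B11 = O(1)
  have hB11 : (fun ν : ℝ => -(2 * ν * (m:ℝ) * t₁) / ((ν - 2) * ((m:ℝ) + ν + 2))) =O[atTop] (fun _ : ℝ => (1:ℝ)) := by
    apply obnd _ ((m:ℝ) * |t₁|)
    intro ν hν
    obtain ⟨h0, h2, h4, hτ, hνM⟩ := std ν hν
    rw [abs_div, abs_neg]
    have hnum : |2 * ν * (m:ℝ) * t₁| = 2 * ν * (m:ℝ) * |t₁| := by
      rw [abs_mul, abs_of_nonneg (by nlinarith : (0:ℝ) ≤ 2 * ν * (m:ℝ))]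
    have hden : (0:ℝ) < (ν - 2) * ((m:ℝ) + ν + 2) := by positivity
    rw [hnum, abs_of_pos hden, div_le_iff₀ hden]
    have hb : (0:ℝ) ≤ (ν - 2) * ((m:ℝ) + ν + 2) - 2 * ν := by nlinarith
    nlinarith [mul_nonneg (mul_nonneg hM0.le (abs_nonneg t₁)) hb]
  -- B12 = O(1)
  have hB12o : (fun ν : ℝ => -(m:ℝ) / ((((m:ℝ) + ν + 2) - 2) * ((m:ℝ) + ν + 2))) =O[atTop] (fun _ : ℝ => (1:ℝ)) := by
    apply obnd _ (m:ℝ)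
    intro ν hν
    obtain ⟨h0, h2, h4, hτ, hνM⟩ := std ν hν
    have hden : (0:ℝ) < ((m:ℝ) + ν + 2 - 2) * ((m:ℝ) + ν + 2) := by
      apply mul_pos (by linarith) hτ
    rw [abs_div, abs_neg, abs_of_pos hM0, abs_of_pos hden, div_le_iff₀ hden]
    nlinarith
  -- B12 * B12 = O(ν⁻³)
  have hB12sq : (fun ν : ℝ => (-(m:ℝ) / ((((m:ℝ) + ν + 2) - 2) * ((m:ℝ) + ν + 2))) * (-(m:ℝ) / ((((m:ℝ) + ν + 2) - 2) * ((m:ℝ) + ν + 2)))) =O[atTop] (fun ν : ℝ => (ν ^ 3)⁻¹) := by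
    apply obnd3 _ ((m:ℝ) ^ 2)
    intro ν hν
    obtain ⟨h0, h2, h4, hτ, hνM⟩ := std ν hν
    have hden : (0:ℝ) < ((m:ℝ) + ν + 2 - 2) * ((m:ℝ) + ν + 2) := by
      apply mul_pos (by linarith) hτ
    have hkey : ν ^ 3 * ((m:ℝ) ^ 2) ≤ (m:ℝ) ^ 2 * (((m:ℝ) + ν + 2 - 2) * ((m:ℝ) + ν + 2)
        * (((m:ℝ) + ν + 2 - 2) * ((m:ℝ) + ν + 2))) := by
      have g1 : ν * ν ≤ ((m:ℝ) + ν + 2 - 2) * ((m:ℝ) + ν + 2) := by nlinarith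
      have g2 : ν ^ 3 ≤ (ν * ν) * (ν * ν) := by nlinarith
      have g3 : (ν * ν) * (ν * ν) ≤ (((m:ℝ) + ν + 2 - 2) * ((m:ℝ) + ν + 2))
          * (((m:ℝ) + ν + 2 - 2) * ((m:ℝ) + ν + 2)) := by
        apply mul_le_mul g1 g1 (by positivity) hden.le
      nlinarith [sq_nonneg (m:ℝ)]
    have habs : |(-(m:ℝ) / (((m:ℝ) + ν + 2 - 2) * ((m:ℝ) + ν + 2))) * (-(m:ℝ) / (((m:ℝ) + ν + 2 - 2) * ((m:ℝ) + ν + 2)))|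
        = (m:ℝ) ^ 2 / (((m:ℝ) + ν + 2 - 2) * ((m:ℝ) + ν + 2) * (((m:ℝ) + ν + 2 - 2) * ((m:ℝ) + ν + 2))) := by
      rw [abs_of_nonneg (mul_self_nonneg _)]
      rw [div_mul_div_comm]
      congr 1
      ring
    rw [habs, div_le_div_iff₀ (by positivity) (by positivity)]
    nlinarith [hkey]
  -- C11 = O(ν⁻³)
  have hC11 : (fun ν : ℝ => (m:ℝ) * t₁ / ((ν - 2) * (((m:ℝ) + ν + 2) - 2) * ((m:ℝ) + ν + 2))) =O[atTop] (fun ν : ℝ => (ν ^ 3)⁻¹) := by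
    apply obnd3 _ (2 * (m:ℝ) * |t₁|)
    intro ν hν
    obtain ⟨h0, h2, h4, hτ, hνM⟩ := std ν hν
    have hden : (0:ℝ) < (ν - 2) * ((m:ℝ) + ν + 2 - 2) * ((m:ℝ) + ν + 2) := by
      apply mul_pos (mul_pos h2 (by linarith)) hτ
    have hnum : |(m:ℝ) * t₁| = (m:ℝ) * |t₁| := by
      rw [abs_mul, abs_of_pos hM0]
    rw [abs_div, hnum, abs_of_pos hden, div_le_div_iff₀ hden (by positivity)]
    have hkey : ν ^ 3 ≤ 2 * ((ν - 2) * ((m:ℝ) + ν + 2 - 2) * ((m:ℝ) + ν + 2)) := by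
      have a1 : ν ≤ 2 * (ν - 2) := by linarith
      have a2 : ν ≤ (m:ℝ) + ν + 2 - 2 := by linarith
      have a3 : ν ≤ (m:ℝ) + ν + 2 := by linarith
      nlinarith [mul_le_mul a2 a3 h0.le (by linarith : (0:ℝ) ≤ (m:ℝ) + ν + 2 - 2),
        mul_le_mul a1 (mul_le_mul a2 a3 h0.le (by linarith : (0:ℝ) ≤ (m:ℝ) + ν + 2 - 2)) (by positivity) (by linarith)]
    nlinarith [mul_nonneg hM0.le (abs_nonneg t₁), hkey,
      mul_le_mul_of_nonneg_left hkey (mul_nonneg hM0.le (abs_nonneg t₁))]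
  have hC11o : (fun ν : ℝ => (m:ℝ) * t₁ / ((ν - 2) * (((m:ℝ) + ν + 2) - 2) * ((m:ℝ) + ν + 2))) =O[atTop] (fun _ : ℝ => (1:ℝ)) := hC11.trans hcube1
  -- assemble
  have h1 : (fun ν : ℝ => (ν * (m:ℝ) / ((m:ℝ) + ν + 2)) * ((2 * (m:ℝ) / (((m:ℝ) + ν + 2) * ν) + 1) * (ν ^ 2 / ((ν - 2) * (ν - 4)) * (2 * t₂ + t₁ ^ 2)) - (ν + 2) / (ν - 2) * t₁ ^ 2) * (-(2 * (m:ℝ) / ν * (((m:ℝ) + ν + 2) + 2) / (((m:ℝ) + ν + 2) * (((m:ℝ) + ν + 2) - 2)) + psi1 ((ν + (m:ℝ)) / 2) - psi1 (ν / 2)))) =O[atTop] (fun ν : ℝ => (ν ^ 3)⁻¹) :=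
    ((hB.mul hC).mul hDf).congr (fun ν => rfl) (fun ν => by norm_num)
  have h2 : (fun ν : ℝ => (-(2 * ν * (m:ℝ) * t₁) / ((ν - 2) * ((m:ℝ) + ν + 2))) * ((m:ℝ) * t₁ / ((ν - 2) * (((m:ℝ) + ν + 2) - 2) * ((m:ℝ) + ν + 2))) * (-(m:ℝ) / ((((m:ℝ) + ν + 2) - 2) * ((m:ℝ) + ν + 2)))) =O[atTop] (fun ν : ℝ => (ν ^ 3)⁻¹) :=
    ((hB11.mul hC11).mul hB12o).congr (fun ν => rfl) (fun ν => by norm_num)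
  have h3 : (fun ν : ℝ => (ν * (m:ℝ) / ((m:ℝ) + ν + 2)) * ((m:ℝ) * t₁ / ((ν - 2) * (((m:ℝ) + ν + 2) - 2) * ((m:ℝ) + ν + 2))) ^ 2) =O[atTop] (fun ν : ℝ => (ν ^ 3)⁻¹) :=
    ((hB.mul hC11o).mul hC11).congr (fun ν => by ring) (fun ν => by norm_num)
  have h4 : (fun ν : ℝ => 8 * (-(m:ℝ) / ((((m:ℝ) + ν + 2) - 2) * ((m:ℝ) + ν + 2))) ^ 2 * ((2 * (m:ℝ) / (((m:ℝ) + ν + 2) * ν) + 1) * (ν ^ 2 / ((ν - 2) * (ν - 4)) * (2 * t₂ + t₁ ^ 2)) - (ν + 2) / (ν - 2) * t₁ ^ 2)) =O[atTop] (fun ν : ℝ => (ν ^ 3)⁻¹) :=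
    ((hB12sq.mul hC).const_mul_left 8).congr (fun ν => by ring) (fun ν => by norm_num)
  have h5 : (fun ν : ℝ => 1 / 2 * (-(2 * ν * (m:ℝ) * t₁) / ((ν - 2) * ((m:ℝ) + ν + 2))) ^ 2 * (-(2 * (m:ℝ) / ν * (((m:ℝ) + ν + 2) + 2) / (((m:ℝ) + ν + 2) * (((m:ℝ) + ν + 2) - 2)) + psi1 ((ν + (m:ℝ)) / 2) - psi1 (ν / 2)))) =O[atTop] (fun ν : ℝ => (ν ^ 3)⁻¹) :=
    (((hB11.mul hB11).mul hDf).const_mul_left (1 / 2)).congr (fun ν => by ring) (fun ν => by norm_num)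
  have hmain : (fun ν : ℝ => (ν * (m:ℝ) / ((m:ℝ) + ν + 2)) * ((2 * (m:ℝ) / (((m:ℝ) + ν + 2) * ν) + 1) * (ν ^ 2 / ((ν - 2) * (ν - 4)) * (2 * t₂ + t₁ ^ 2)) - (ν + 2) / (ν - 2) * t₁ ^ 2) * (-(2 * (m:ℝ) / ν * (((m:ℝ) + ν + 2) + 2) / (((m:ℝ) + ν + 2) * (((m:ℝ) + ν + 2) - 2)) + psi1 ((ν + (m:ℝ)) / 2) - psi1 (ν / 2))) + 16 * ((-(2 * ν * (m:ℝ) * t₁) / ((ν - 2) * ((m:ℝ) + ν + 2))) * ((m:ℝ) * t₁ / ((ν - 2) * (((m:ℝ) + ν + 2) - 2) * ((m:ℝ) + ν + 2))) * (-(m:ℝ) / ((((m:ℝ) + ν + 2) - 2) * ((m:ℝ) + ν + 2))) - (ν * (m:ℝ) / ((m:ℝ) + ν + 2)) * ((m:ℝ) * t₁ / ((ν - 2) * (((m:ℝ) + ν + 2) - 2) * ((m:ℝ) + ν + 2))) ^ 2) - 8 * (-(m:ℝ) / ((((m:ℝ) + ν + 2) - 2) * ((m:ℝ) + ν + 2)))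 ^ 2 * ((2 * (m:ℝ) / (((m:ℝ) + ν + 2) * ν) + 1) * (ν ^ 2 / ((ν - 2) * (ν - 4)) * (2 * t₂ + t₁ ^ 2)) - (ν + 2) / (ν - 2) * t₁ ^ 2) - 1 / 2 * (-(2 * ν * (m:ℝ) * t₁) / ((ν - 2) * ((m:ℝ) + ν + 2))) ^ 2 * (-(2 * (m:ℝ) / ν * (((m:ℝ) + ν + 2) + 2) / (((m:ℝ) + ν + 2) * (((m:ℝ) + ν + 2) - 2)) + psi1 ((ν + (m:ℝ)) / 2) - psi1 (ν / 2)))) =O[atTop] (fun ν : ℝ => (ν ^ 3)⁻¹) :=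
    ((h1.add ((h2.sub h3).const_mul_left 16)).sub h4).sub h5
  have hkey : (Δfun m t₁ t₂) =O[atTop] (fun ν : ℝ => (ν ^ 3)⁻¹) := hmain
  refine hkey.trans (Filter.EventuallyEq.isBigO ?_)
  filter_upwards [eventually_gt_atTop (0:ℝ)] with ν hν
  rw [Real.rpow_neg hν.le, show ((3:ℝ)) = ((3:ℕ):ℝ) by norm_num, Real.rpow_natCast]
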